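/- arXiv:1012.4337 — 4 statements merged into one kernel-verified Lean document; each statement's English description precedes it below -/
import Mathlib

section
/- Let G be a group with elements τ₁, τ₂ such that τ₁² = τ₂², τ₁ has order 2^{n+1}, and τ₂τ₁ = τ₁^{2^n + 1}τ₂. Then the element ν = τ₁^{2^{n−1}c − 1}τ₂, where c is odd and 2^{n−1}c = 2a + 2, has order 2. -/
theorem stmt_2 {G : Type*} [Group G] (n a c : ℕ) (hn : 1 ≤ n)
    (τ₁ τ₂ : G)
    (hord : orderOf τ₁ = 2 ^ (n + 1))
    (hsq : τ₁ ^ 2 = τ₂ ^ 2)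
    (hrel : τ₂ * τ₁ = τ₁ ^ (2 ^ n + 1) * τ₂)
    (hc : Odd c) (hca : 2 ^ (n - 1) * c = 2 * a + 2) :
    orderOf (τ₁ ^ (2 ^ (n - 1) * c - 1) * τ₂) = 2 := by
  obtain ⟨t, ht⟩ := hc
  -- n = 1 leads to contradiction (c would be even)
  rcases Nat.lt_or_ge n 2 with hn2 | hn2
  · interval_cases n
    · simp at hca; omega
  -- commutation lemma
  have hcomm : ∀ k : ℕ, τ₂ * τ₁ ^ k = τ₁ ^ (k * (2 ^ n + 1)) * τ₂ := by
    intro k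
    induction k with
    | zero => simp
    | succ k ih =>
      rw [pow_succ, ← mul_assoc, ih, mul_assoc, hrel, ← mul_assoc, ← pow_add]
      ring_nf
  have hkey : 2 ^ (n - 1) * c - 1 = 2 * a + 1 := by omega
  rw [hkey]
  set k := 2 * a + 1 with hk
  set ν := τ₁ ^ k * τ₂ with hν
  have hsq2 : ν ^ 2 = τ₁ ^ (k + (k * (2 ^ n + 1) + 2)) := by
    rw [hν, pow_two, mul_assoc, ← mul_assoc τ₂, hcomm, mul_assoc,
      ← pow_two τ₂, ← hsq, ← pow_add, ← pow_add]
  -- power arithmetic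
  obtain ⟨P, hP⟩ : ∃ P, 2 ^ (n - 1) = P := ⟨_, rfl⟩
  have hn1 : 2 ^ n = 2 * P := by rw [← hP, ← pow_succ']; congr 1; omega
  have hn2' : 2 ^ (n + 1) = 4 * P := by rw [pow_succ, hn1]; ring
  rw [hP] at hca
  have hE : ν ^ 2 = 1 := by
    rw [hsq2]
    apply orderOf_dvd_iff_pow_eq_one.mp
    rw [hord]
    have : k + (k * (2 ^ n + 1) + 2) = 2 ^ (n + 1) * (t + a + 1) := by
      rw [hn1, hn2', hk]
      subst ht
      nlinarith [hca]
    rw [this]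
    exact Dvd.intro _ rfl
  have hne : ν ≠ 1 := by
    intro h
    rw [hν] at h
    have hτ2 : τ₂ = (τ₁ ^ k)⁻¹ := eq_inv_of_mul_eq_one_right h
    have hcom : Commute τ₁ τ₂ := hτ2 ▸ ((Commute.refl τ₁).pow_right k).inv_right
    rw [← hcom.eq] at hrel
    have h1 : τ₁ ^ (2 ^ n + 1) = τ₁ := mul_right_cancel hrel.symm
    have h2 : τ₁ ^ (2 ^ n) = 1 := by
      rw [pow_succ] at h1
      exact mul_right_cancel (by rw [h1, one_mul])
    have h3 := orderOf_dvd_of_pow_eq_one h2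
    rw [hord] at h3
    have h4 := Nat.le_of_dvd (by positivity) h3
    have h5 : (2:ℕ) ^ (n + 1) > 2 ^ n := Nat.pow_lt_pow_right (by norm_num) (by omega)
    omega
  exact orderOf_eq_prime hE hne
end

section
/- The group with presentation ⟨D₁, D₂, D₃, D₄ : D₁^{2^{n+1}} = D₂^{2^{n+1}} = D₃^{2^n} = D₄² = 1, D₁D₂D₃D₄ = 1, D₁² = D₂², D₃ = D₁^{c·2^{n−1} − 2}⟩, where c is even and c·2^{n−1} = 2a+2, is abelian and isomorphic to ℤ/2^{n+1}ℤ × ℤ/2ℤ. -/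
private lemma aux_comm_closure {G : Type*} [Group G] {s : Set G}
    (h : ∀ a ∈ s, ∀ b ∈ s, a * b = b * a) {x y : G}
    (hx : x ∈ Subgroup.closure s) (hy : y ∈ Subgroup.closure s) : x * y = y * x :=
  Subgroup.closure_induction₂ (p := fun x y _ _ => Commute x y)
    (fun a b ha hb => h a ha b hb)
    (fun x _ => Commute.one_left x) (fun x _ => Commute.one_right x)
    (fun _ _ _ _ _ _ h1 h2 => h1.mul_left h2)
    (fun _ _ _ _ _ _ h1 h2 => h1.mul_right h2)
    (fun _ _ _ _ h => h.inv_left) (fun _ _ _ _ h => h.inv_right) hx hy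

theorem stmt_3 (n a c : ℕ) (hn : 1 ≤ n) (hc : Even c)
    (hca : c * 2 ^ (n - 1) = 2 * a + 2)
    (rels : Set (FreeGroup (Fin 4)))
    (hrels : rels =
      { FreeGroup.of 0 ^ (2 ^ (n + 1)),
        FreeGroup.of 1 ^ (2 ^ (n + 1)),
        FreeGroup.of 2 ^ (2 ^ n),
        FreeGroup.of 3 ^ 2,
        FreeGroup.of 0 * FreeGroup.of 1 * FreeGroup.of 2 * FreeGroup.of 3,
        FreeGroup.of 0 ^ 2 * (FreeGroup.of 1 ^ 2)⁻¹,
        (FreeGroup.of 2)⁻¹ * FreeGroup.of 0 ^ (c * 2 ^ (n - 1) - 2) }) :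
    (∀ x y : PresentedGroup rels, x * y = y * x) ∧
      Nonempty (PresentedGroup rels ≃* Multiplicative (ZMod (2 ^ (n + 1)) × ZMod 2)) := by
  subst hrels
  obtain ⟨k, rfl⟩ : ∃ k, n = k + 1 := ⟨n - 1, by omega⟩
  obtain ⟨c', rfl⟩ : ∃ c', c = c' + c' := hc
  simp only [Nat.add_sub_cancel] at hca
  -- key numeric fact
  have he : 2 * a + 2 = c' * 2 ^ (k + 1) := by
    rw [pow_succ, ← hca]; ring
  set M : ℕ := 2 ^ (k + 2) with hM
  haveI : NeZero M := ⟨by positivity⟩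
  haveI : Fact (1 < M) := ⟨by rw [hM]; exact Nat.one_lt_two_pow_iff.mpr (by omega)⟩
  haveI : Fact (1 < 2) := ⟨one_lt_two⟩
  set rels : Set (FreeGroup (Fin 4)) :=
      { FreeGroup.of 0 ^ (2 ^ (k + 1 + 1)),
        FreeGroup.of 1 ^ (2 ^ (k + 1 + 1)),
        FreeGroup.of 2 ^ (2 ^ (k + 1)),
        FreeGroup.of 3 ^ 2,
        FreeGroup.of 0 * FreeGroup.of 1 * FreeGroup.of 2 * FreeGroup.of 3,
        FreeGroup.of 0 ^ 2 * (FreeGroup.of 1 ^ 2)⁻¹,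
        (FreeGroup.of 2)⁻¹ * FreeGroup.of 0 ^ ((c' + c') * 2 ^ k - 2) } with hrels
  have hrelm : ∀ r ∈ rels, PresentedGroup.mk rels r = 1 := fun r hr =>
    (QuotientGroup.eq_one_iff r).2 (Subgroup.subset_normalClosure hr)
  set P := PresentedGroup rels with hP
  set u : P := PresentedGroup.of 0 with hu
  set w : P := PresentedGroup.of 1 with hw
  -- relations in P
  have h1 : u ^ M = 1 := by
    have := hrelm _ (show FreeGroup.of 0 ^ (2 ^ (k + 1 + 1)) ∈ rels by
      rw [hrels]; left; rfl)
    exact this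
  have h6 : u ^ 2 = w ^ 2 := by
    have := hrelm _ (show FreeGroup.of 0 ^ 2 * (FreeGroup.of 1 ^ 2)⁻¹ ∈ rels by
      rw [hrels]; right; right; right; right; right; left; rfl)
    simp only [map_mul, map_inv, map_pow] at this
    exact mul_inv_eq_one.mp this
  have hexp : (c' + c') * 2 ^ k - 2 = 2 * a := by omega
  have hd2 : (PresentedGroup.of 2 : P) = u ^ (2 * a) := by
    have := hrelm _ (show (FreeGroup.of 2)⁻¹ * FreeGroup.of 0 ^ ((c' + c') * 2 ^ k - 2) ∈ rels by
      rw [hrels]; right; right; right; right; right; right; rfl)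
    simp only [map_mul, map_inv, map_pow, hexp] at this
    exact inv_mul_eq_one.mp this
  have hd3 : (PresentedGroup.of 3 : P) = (u * w * PresentedGroup.of 2)⁻¹ := by
    have := hrelm _ (show FreeGroup.of 0 * FreeGroup.of 1 * FreeGroup.of 2 * FreeGroup.of 3 ∈ rels
      by rw [hrels]; right; right; right; right; left; rfl)
    simp only [map_mul] at this
    exact eq_inv_of_mul_eq_one_right this
  have h4 : (PresentedGroup.of 3 : P) ^ 2 = 1 := by
    have := hrelm _ (show FreeGroup.of 3 ^ 2 ∈ rels by
      rw [hrels]; right; right; right; left; rfl)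
    exact this
  -- u^(4a+4) = 1
  have hA : u ^ (4 * a + 4) = 1 := by
    have hMc : M * c' = 2 * (2 * a + 2) := by rw [he, hM]; ring
    rw [show 4 * a + 4 = M * c' from by omega, pow_mul, h1, one_pow]
  -- commutation lemmas
  have cw : u ^ (2 * a) * w = w * u ^ (2 * a) := by
    have hc2w : Commute (u ^ 2) w := by rw [h6]; exact (Commute.refl w).pow_left 2
    have : Commute (u ^ (2 * a)) w := by
      rw [pow_mul]; exact (hc2w.pow_left a)
    exact this
  have C0 : u * w * u ^ (2 * a) * (u * w * u ^ (2 * a)) = 1 := by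
    have h4' := h4
    rw [hd3, hd2, inv_pow, inv_eq_one] at h4'
    rw [← pow_two]
    exact h4'
  have step : u * w * u ^ (2 * a) * (u * w * u ^ (2 * a)) = u * w * (u * w) * u ^ (4 * a) := by
    calc u * w * u ^ (2 * a) * (u * w * u ^ (2 * a))
        = u * w * u * (u ^ (2 * a) * w) * u ^ (2 * a) := by group
      _ = u * w * u * (w * u ^ (2 * a)) * u ^ (2 * a) := by rw [cw]
      _ = u * w * (u * w) * (u ^ (2 * a) * u ^ (2 * a)) := by group
      _ = u * w * (u * w) * u ^ (4 * a) := by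
          rw [← pow_add, show 2 * a + (2 * a) = 4 * a from by omega]
  have key : u * w * (u * w) * u ^ (4 * a) = 1 := by rw [← step]; exact C0
  have e2 : u * w * (u * w) = u ^ 4 := by
    have h' : (u ^ (4 * a))⁻¹ = u ^ 4 := by
      refine inv_eq_of_mul_eq_one_right ?_
      rw [← pow_add]; exact hA
    rw [mul_eq_one_iff_eq_inv] at key
    rw [key, h']
  have hcuw : u * w = w * u := by
    have hx : u * ((u * w) * w) = u * ((w * u) * w) := by
      have l1 : u * ((w * u) * w) = u * w * (u * w) := by group
      have l2 : u * ((u * w) * w) = u ^ 2 * w ^ 2 := by rw [pow_two, pow_two]; group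
      rw [l1, l2, e2, ← h6]; group
    exact mul_right_cancel (mul_left_cancel hx)
  -- all elements commute
  have hmem : ∀ j : Fin 4, (PresentedGroup.of j : P) ∈ Subgroup.closure ({u, w} : Set P) := by
    have hu' : u ∈ Subgroup.closure ({u, w} : Set P) := Subgroup.subset_closure (Or.inl rfl)
    have hw' : w ∈ Subgroup.closure ({u, w} : Set P) := Subgroup.subset_closure (Or.inr rfl)
    have g2 : (PresentedGroup.of (2 : Fin 4) : P) ∈ Subgroup.closure ({u, w} : Set P) := by
      rw [hd2]; exact pow_mem hu' _
    have g3 : (PresentedGroup.of (3 : Fin 4) : P) ∈ Subgroup.closure ({u, w} : Set P) := by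
      rw [hd3, hd2]
      exact inv_mem (mul_mem (mul_mem hu' hw') (pow_mem hu' _))
    intro j
    fin_cases j
    · exact hu'
    · exact hw'
    · exact g2
    · exact g3
  have htop : ∀ x : P, x ∈ Subgroup.closure ({u, w} : Set P) := fun x =>
    PresentedGroup.generated_by rels _ hmem x
  have hbase : ∀ x ∈ ({u, w} : Set P), ∀ y ∈ ({u, w} : Set P), x * y = y * x := by
    rintro x (rfl | rfl) y (rfl | rfl)
    · rfl
    · exact hcuw
    · exact hcuw.symm
    · rfl
  have hcomm : ∀ x y : P, x * y = y * x := fun x y =>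
    aux_comm_closure hbase (htop x) (htop y)
  refine ⟨hcomm, ?_⟩
  -- the target group
  set G' := Multiplicative (ZMod M × ZMod 2) with hG'
  have hpow0 : (2 : ZMod M) ^ (k + 2) = 0 := by
    have := ZMod.natCast_self M
    rw [hM] at this ⊢
    push_cast at this
    exact_mod_cast this
  have heZ : 2 * (a : ZMod M) + 2 = (c' : ZMod M) * 2 ^ (k + 1) := by
    have := congrArg (Nat.cast : ℕ → ZMod M) he
    push_cast at this
    exact_mod_cast this
  set f : Fin 4 → G' :=
    ![Multiplicative.ofAdd ((1 : ZMod M), (0 : ZMod 2)),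
      Multiplicative.ofAdd ((1 : ZMod M), (1 : ZMod 2)),
      Multiplicative.ofAdd (((2 * a : ℕ) : ZMod M), (0 : ZMod 2)),
      Multiplicative.ofAdd (-((2 * a + 2 : ℕ) : ZMod M), (1 : ZMod 2))] with hf
  have hf0 : f 0 = Multiplicative.ofAdd ((1 : ZMod M), (0 : ZMod 2)) := rfl
  have hf1 : f 1 = Multiplicative.ofAdd ((1 : ZMod M), (1 : ZMod 2)) := rfl
  have hf2 : f 2 = Multiplicative.ofAdd (((2 * a : ℕ) : ZMod M), (0 : ZMod 2)) := rfl
  have hf3 : f 3 = Multiplicative.ofAdd (-((2 * a + 2 : ℕ) : ZMod M), (1 : ZMod 2)) := rfl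
  have hlift : ∀ r ∈ rels, FreeGroup.lift f r = 1 := by
    intro r hr
    rw [hrels] at hr
    simp only [Set.mem_insert_iff, Set.mem_singleton_iff] at hr
    rcases hr with rfl | rfl | rfl | rfl | rfl | rfl | rfl <;>
        simp only [map_pow, map_mul, map_inv, FreeGroup.lift_apply_of, hf0, hf1, hf2, hf3]
    · rw [← ofAdd_nsmul, ofAdd_eq_one, Prod.smul_mk, Prod.ext_iff]
      constructor
      · show (2 ^ (k + 1 + 1)) • (1 : ZMod M) = 0
        rw [nsmul_eq_mul, mul_one]
        push_cast
        exact hpow0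
      · simp
    · rw [← ofAdd_nsmul, ofAdd_eq_one, Prod.smul_mk, Prod.ext_iff]
      constructor
      · show (2 ^ (k + 1 + 1)) • (1 : ZMod M) = 0
        rw [nsmul_eq_mul, mul_one]
        push_cast
        exact hpow0
      · show (2 ^ (k + 1 + 1)) • (1 : ZMod 2) = 0
        rw [nsmul_eq_mul, mul_one]
        push_cast
        rw [show (2 : ZMod 2) = 0 from rfl]
        exact zero_pow (by omega)
    · rw [← ofAdd_nsmul, ofAdd_eq_one, Prod.smul_mk, Prod.ext_iff]
      constructor
      · show (2 ^ (k + 1)) • ((2 * a : ℕ) : ZMod M) = 0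
        rw [nsmul_eq_mul]
        push_cast
        linear_combination (2 : ZMod M) ^ (k + 1) * heZ + ((c' : ZMod M) * 2 ^ k - 1) * hpow0
      · simp
    · rw [← ofAdd_nsmul, ofAdd_eq_one, Prod.smul_mk, Prod.ext_iff]
      constructor
      · show 2 • (-((2 * a + 2 : ℕ) : ZMod M)) = 0
        rw [nsmul_eq_mul]
        push_cast
        linear_combination (-2 : ZMod M) * heZ - (c' : ZMod M) * hpow0
      · show 2 • (1 : ZMod 2) = 0
        decide
    · rw [← ofAdd_add, ← ofAdd_add, ← ofAdd_add, ofAdd_eq_one]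
      refine Prod.ext ?_ ?_
      · show (1 : ZMod M) + 1 + ((2 * a : ℕ) : ZMod M) + -((2 * a + 2 : ℕ) : ZMod M) = 0
        push_cast
        ring
      · show (0 : ZMod 2) + 1 + 0 + 1 = 0
        decide
    · rw [← ofAdd_nsmul, ← ofAdd_nsmul, ← ofAdd_neg, ← ofAdd_add, ofAdd_eq_one, Prod.smul_mk,
        Prod.smul_mk, Prod.neg_mk, Prod.mk_add_mk, Prod.ext_iff]
      constructor
      · show 2 • (1 : ZMod M) + -(2 • (1 : ZMod M)) = 0
        ring
      · show 2 • (0 : ZMod 2) + -(2 • (1 : ZMod 2)) = 0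
        decide
    · rw [hexp, ← ofAdd_nsmul, ← ofAdd_neg, ← ofAdd_add, ofAdd_eq_one, Prod.smul_mk,
        Prod.neg_mk, Prod.mk_add_mk, Prod.ext_iff]
      constructor
      · show -((2 * a : ℕ) : ZMod M) + (2 * a) • (1 : ZMod M) = 0
        rw [nsmul_eq_mul, mul_one]
        push_cast
        ring
      · simp
  -- the homomorphism P →* G'
  set φ : P →* G' := PresentedGroup.toGroup hlift with hφ
  -- the inverse homomorphism
  set v : P := w * u⁻¹ with hv
  have hv2 : v ^ 2 = 1 := by
    have hcw : u⁻¹ * w = w * u⁻¹ := hcomm u⁻¹ w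
    have l2 : (w * u⁻¹) * (w * u⁻¹) = (w * w) * (u * u)⁻¹ := by
      calc (w * u⁻¹) * (w * u⁻¹) = w * (u⁻¹ * w) * u⁻¹ := by group
        _ = w * (w * u⁻¹) * u⁻¹ := by rw [hcw]
        _ = (w * w) * (u * u)⁻¹ := by group
    rw [pow_two, hv, l2, show w * w = w ^ 2 from (pow_two w).symm,
      show u * u = u ^ 2 from (pow_two u).symm, ← h6, mul_inv_cancel]
  have ψmul : ∀ p q r s : ℕ, u ^ p * v ^ q * (u ^ r * v ^ s) = u ^ (p + r) * v ^ (q + s) := by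
    intro p q r s
    have cuv : Commute u v := by
      have : Commute u w := hcomm u w
      rw [hv]
      exact this.mul_right (Commute.inv_right (Commute.refl u))
    have hc : v ^ q * u ^ r = u ^ r * v ^ q := ((cuv.pow_pow r q).symm).eq
    calc u ^ p * v ^ q * (u ^ r * v ^ s) = u ^ p * (v ^ q * u ^ r) * v ^ s := by group
      _ = u ^ p * (u ^ r * v ^ q) * v ^ s := by rw [hc]
      _ = u ^ (p + r) * v ^ (q + s) := by rw [pow_add, pow_add]; group
  set ψ : G' →* P :=
    { toFun := fun g => u ^ (Multiplicative.toAdd g).1.val * v ^ (Multiplicative.toAdd g).2.val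
      map_one' := by simp
      map_mul' := by
        intro x y
        show u ^ ((Multiplicative.toAdd x).1 + (Multiplicative.toAdd y).1).val *
            v ^ ((Multiplicative.toAdd x).2 + (Multiplicative.toAdd y).2).val = _
        rw [ZMod.val_add, ZMod.val_add, ← pow_eq_pow_mod _ h1, ← pow_eq_pow_mod _ hv2, ψmul] }
    with hψ
  -- composite identities
  have hφu : φ u = Multiplicative.ofAdd ((1 : ZMod M), (0 : ZMod 2)) := by
    rw [hφ, hu]; exact PresentedGroup.toGroup.of hlift
  have hφw : φ w = Multiplicative.ofAdd ((1 : ZMod M), (1 : ZMod 2)) := by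
    rw [hφ, hw]; exact PresentedGroup.toGroup.of hlift
  have k0 : ψ (φ u) = u := by
    rw [hφu]
    show u ^ (1 : ZMod M).val * v ^ (0 : ZMod 2).val = u
    rw [ZMod.val_one, ZMod.val_zero, pow_one, pow_zero, mul_one]
  have k1 : ψ (φ w) = w := by
    rw [hφw]
    show u ^ (1 : ZMod M).val * v ^ (1 : ZMod 2).val = w
    rw [ZMod.val_one, ZMod.val_one, pow_one, pow_one, hv, hcomm]
    group
  have hl : ψ.comp φ = MonoidHom.id P := by
    ext x
    fin_cases x
    · exact k0
    · exact k1
    · show ψ (φ (PresentedGroup.of 2)) = PresentedGroup.of 2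
      rw [hd2, map_pow, map_pow, k0]
    · show ψ (φ (PresentedGroup.of 3)) = PresentedGroup.of 3
      rw [hd3, hd2, map_inv, map_mul, map_mul, map_pow, map_inv, map_mul, map_mul, map_pow,
        k0, k1]
  have hr : φ.comp ψ = MonoidHom.id G' := by
    refine MonoidHom.ext fun g => ?_
    show φ (u ^ (Multiplicative.toAdd g).1.val * v ^ (Multiplicative.toAdd g).2.val) = g
    rw [map_mul, map_pow, map_pow, hv, map_mul, map_inv, hφu, hφw]
    set p := (Multiplicative.toAdd g).1.val
    set q := (Multiplicative.toAdd g).2.val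
    have : (Multiplicative.ofAdd ((1 : ZMod M), (1 : ZMod 2)) *
        (Multiplicative.ofAdd ((1 : ZMod M), (0 : ZMod 2)))⁻¹)
        = Multiplicative.ofAdd ((0 : ZMod M), (1 : ZMod 2)) := by
      rw [← ofAdd_neg, ← ofAdd_add, Prod.neg_mk, Prod.mk_add_mk]
      norm_num
    rw [this, ← ofAdd_nsmul, ← ofAdd_nsmul, ← ofAdd_add, Prod.smul_mk, Prod.smul_mk,
      Prod.mk_add_mk, smul_zero, smul_zero, add_zero, zero_add, nsmul_eq_mul, nsmul_eq_mul,
      mul_one, mul_one]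
    rw [ZMod.natCast_rightInverse _, ZMod.natCast_rightInverse _]
    exact ofAdd_toAdd g
  exact ⟨MonoidHom.toMulEquiv φ ψ hl hr⟩
end

section
/- In the group presented by ⟨D₁, D₂, D₃, D₄ : D₁^{2^{n+1}} = D₂^{2^{n+1}} = D₃^{2^n} = D₄² = 1, D₁D₂D₃D₄ = 1, D₁² = D₂², D₃ = D₁^{3·2^{n−1}c − 2}⟩ with c odd, the relation D₂D₁ = D₁^{2^n + 1}D₂ holds, and hence the group is isomorphic to the semidirect product ℤ/2^{n+1}ℤ ⋊ ℤ/2ℤ where the action sends the generator to its (2^n+1)-th power. -/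
open Multiplicative SemidirectProduct

noncomputable def zmodGenHom {G : Type*} [Group G] (q : ℕ) (a : G) (h : a ^ q = 1) :
    Multiplicative (ZMod q) →* G :=
  AddMonoidHom.toMultiplicativeLeft
    (ZMod.lift q ⟨zmultiplesHom (Additive G) (Additive.ofMul a), by
      simpa [zmultiplesHom, ← ofMul_zpow] using congrArg Additive.ofMul
        (by rw [zpow_natCast, h] : a ^ (q : ℤ) = 1)⟩)

lemma zmodGenHom_intCast {G : Type*} [Group G] (q : ℕ) (a : G) (h : a ^ q = 1) (z : ℤ) :
    zmodGenHom q a h (ofAdd ((z : ZMod q))) = a ^ z := by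
  have := ZMod.lift_coe q ⟨zmultiplesHom (Additive G) (Additive.ofMul a), by
      simpa [zmultiplesHom, ← ofMul_zpow] using congrArg Additive.ofMul
        (by rw [zpow_natCast, h] : a ^ (q : ℤ) = 1)⟩ z
  simpa [zmodGenHom, AddMonoidHom.coe_toMultiplicativeLeft, zmultiplesHom, ← ofMul_zpow] using
    congrArg Additive.toMul this

lemma zmodGenHom_natCast {G : Type*} [Group G] (q : ℕ) (a : G) (h : a ^ q = 1) (p : ℕ) :
    zmodGenHom q a h (ofAdd ((p : ZMod q))) = a ^ p := by
  have := zmodGenHom_intCast q a h p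
  rw [zpow_natCast] at this
  rw [← this]
  norm_cast

lemma zmodGenHom_ofAdd_one {G : Type*} [Group G] (q : ℕ) (a : G) (h : a ^ q = 1) :
    zmodGenHom q a h (ofAdd 1) = a := by
  simpa using zmodGenHom_natCast q a h 1

lemma zmod_hom_ext {G : Type*} [Group G] (q : ℕ) (ψ₁ ψ₂ : Multiplicative (ZMod q) →* G)
    (h : ψ₁ (ofAdd 1) = ψ₂ (ofAdd 1)) : ψ₁ = ψ₂ := by
  apply MonoidHom.ext; intro x
  obtain ⟨z, hz⟩ := ZMod.intCast_surjective (n := q) (x.toAdd)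
  have hx : x = (ofAdd (1 : ZMod q)) ^ z := by
    rw [← ofAdd_zsmul]
    apply_fun Multiplicative.toAdd
    simpa [zsmul_eq_mul] using hz.symm
  rw [hx, map_zpow, map_zpow, h]

lemma zmod_nat_eq (N x y t s : ℕ) (h : x + N * t = y + N * s) :
    (x : ZMod N) = (y : ZMod N) := by
  have := congrArg (Nat.cast : ℕ → ZMod N) h
  push_cast at this
  simpa [ZMod.natCast_self] using this

lemma conj_core {G : Type*} [Group G] (a b : G) (k q : ℤ) (hq : k = 2*q+1)
    (hab : a^(2:ℤ) = b^(2:ℤ))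
    (hkk : b * a^k * b * a^k = 1) :
    b * a * b⁻¹ = a^(-(2*k+1)) := by
  have h1 : b * a^k * b = (a^k)⁻¹ := by
    rw [eq_inv_iff_mul_eq_one]; exact hkk
  have hbk : b * a^k * b⁻¹ = a^(-k-2) := by
    calc b * a^k * b⁻¹ = (b * a^k * b) * (b*b)⁻¹ := by group
    _ = (a^k)⁻¹ * (b^(2:ℤ))⁻¹ := by rw [h1]; group
    _ = (a^k)⁻¹ * (a^(2:ℤ))⁻¹ := by rw [hab]
    _ = a^(-k-2) := by group
  have h2 : (b*a*b⁻¹)^(2:ℤ) = a^(2:ℤ) := by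
    calc (b*a*b⁻¹)^(2:ℤ) = b * a^(2:ℤ) * b⁻¹ := conj_zpow
    _ = b * b^(2:ℤ) * b⁻¹ := by rw [hab]
    _ = b^(2:ℤ) := by group
    _ = a^(2:ℤ) := hab.symm
  have hek : (b*a*b⁻¹)^k = a^(-k-2) := by
    rw [← hbk]; exact conj_zpow
  calc b*a*b⁻¹ = ((b*a*b⁻¹)^k) * (((b*a*b⁻¹)^(2:ℤ))^(-q)) := by
        rw [← zpow_mul, ← zpow_add, hq]; norm_num
  _ = a^(-k-2) * (a^(2:ℤ))^(-q) := by rw [hek, h2]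
  _ = a^(-(2*k+1)) := by
        rw [← zpow_mul, ← zpow_add]; congr 1; omega

lemma zpow_eq_zpow_of_dvd {G : Type*} [Group G] (a : G) (N : ℕ) (ha : a ^ N = 1)
    (z w : ℤ) (h : (N:ℤ) ∣ z - w) : a ^ z = a ^ w := by
  obtain ⟨t, ht⟩ := h
  have hz : z = w + N * t := by omega
  rw [hz, zpow_add, zpow_mul, zpow_natCast, ha, one_zpow, mul_one]

set_option maxHeartbeats 1000000 in
theorem stmt_4 (n c : ℕ) (hn : 3 < n) (hc : Odd c)
    (rels : Set (FreeGroup (Fin 4)))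
    (hrels : rels =
      { FreeGroup.of 0 ^ (2 ^ (n + 1)),
        FreeGroup.of 1 ^ (2 ^ (n + 1)),
        FreeGroup.of 2 ^ (2 ^ n),
        FreeGroup.of 3 ^ 2,
        FreeGroup.of 0 * FreeGroup.of 1 * FreeGroup.of 2 * FreeGroup.of 3,
        FreeGroup.of 0 ^ 2 * (FreeGroup.of 1 ^ 2)⁻¹,
        (FreeGroup.of 2)⁻¹ * FreeGroup.of 0 ^ (3 * 2 ^ (n - 1) * c - 2) }) :
    (PresentedGroup.of (rels := rels) 1 * PresentedGroup.of 0 =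
        PresentedGroup.of 0 ^ (2 ^ n + 1) * PresentedGroup.of 1) ∧
    ∀ φ : Multiplicative (ZMod 2) →* MulAut (Multiplicative (ZMod (2 ^ (n + 1)))),
      (∀ x : Multiplicative (ZMod (2 ^ (n + 1))),
          φ (Multiplicative.ofAdd 1) x = x ^ (2 ^ n + 1)) →
      Nonempty (PresentedGroup rels ≃*
        (Multiplicative (ZMod (2 ^ (n + 1))) ⋊[φ] Multiplicative (ZMod 2))) := by
  obtain ⟨u, rfl⟩ : ∃ u, n = u + 4 := ⟨n - 4, by omega⟩
  obtain ⟨v, rfl⟩ := hc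
  have hsub : u + 4 - 1 = u + 3 := by omega
  rw [hsub] at hrels
  subst hrels
  clear hn
  set c := 2 * v + 1 with hcdef
  set R : Set (FreeGroup (Fin 4)) :=
      { FreeGroup.of 0 ^ (2 ^ (u + 4 + 1)),
        FreeGroup.of 1 ^ (2 ^ (u + 4 + 1)),
        FreeGroup.of 2 ^ (2 ^ (u + 4)),
        FreeGroup.of 3 ^ 2,
        FreeGroup.of 0 * FreeGroup.of 1 * FreeGroup.of 2 * FreeGroup.of 3,
        FreeGroup.of 0 ^ 2 * (FreeGroup.of 1 ^ 2)⁻¹,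
        (FreeGroup.of 2)⁻¹ * FreeGroup.of 0 ^ (3 * 2 ^ (u + 3) * c - 2) } with hR
  set a : PresentedGroup R := PresentedGroup.of 0 with ha_def
  set b : PresentedGroup R := PresentedGroup.of 1 with hb_def
  set r : PresentedGroup R := PresentedGroup.of 2 with hr_def
  set s : PresentedGroup R := PresentedGroup.of 3 with hs_def
  have hrel : ∀ w ∈ R, PresentedGroup.mk R w = 1 := fun w hw =>
    (QuotientGroup.eq_one_iff w).mpr (Subgroup.subset_normalClosure hw)
  -- sizes
  set M : ℕ := 3 * 2 ^ (u + 3) * c with hM_def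
  have hM2 : 2 ≤ M := by
    have h8 : (8:ℕ) ≤ 2 ^ (u+3) := by
      calc (8:ℕ) = 2^3 := by norm_num
      _ ≤ 2^(u+3) := Nat.pow_le_pow_right (by norm_num) (by omega)
    calc 2 ≤ 3 * 2^(u+3) * 1 := by omega
    _ ≤ M := by rw [hM_def]; have : 1 ≤ c := by omega
                exact Nat.mul_le_mul_left _ this
  set m : ℕ := M - 2 with hm_def
  have hmM : m + 2 = M := by omega
  -- relations
  have Ha : a ^ (2 ^ (u+4+1)) = 1 := by
    have := hrel _ (show FreeGroup.of 0 ^ (2 ^ (u + 4 + 1)) ∈ R from Set.mem_insert _ _)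
    simp only [map_pow] at this; exact this
  have Hb : b ^ (2 ^ (u+4+1)) = 1 := by
    have := hrel _ (show FreeGroup.of 1 ^ (2 ^ (u + 4 + 1)) ∈ R from
      Set.mem_insert_of_mem _ (Set.mem_insert _ _))
    simp only [map_pow] at this; exact this
  have Hs : s ^ 2 = 1 := by
    have := hrel _ (show FreeGroup.of 3 ^ 2 ∈ R from
      Set.mem_insert_of_mem _ (Set.mem_insert_of_mem _ (Set.mem_insert_of_mem _
        (Set.mem_insert _ _))))
    simp only [map_pow] at this; exact this
  have Habrs : a * b * r * s = 1 := by
    have := hrel _ (show FreeGroup.of 0 * FreeGroup.of 1 * FreeGroup.of 2 * FreeGroup.of 3 ∈ R from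
      Set.mem_insert_of_mem _ (Set.mem_insert_of_mem _ (Set.mem_insert_of_mem _
        (Set.mem_insert_of_mem _ (Set.mem_insert _ _)))))
    simp only [map_mul] at this; exact this
  have Hab2 : a ^ 2 = b ^ 2 := by
    have := hrel _ (show FreeGroup.of 0 ^ 2 * (FreeGroup.of 1 ^ 2)⁻¹ ∈ R from
      Set.mem_insert_of_mem _ (Set.mem_insert_of_mem _ (Set.mem_insert_of_mem _
        (Set.mem_insert_of_mem _ (Set.mem_insert_of_mem _ (Set.mem_insert _ _))))))
    simp only [map_mul, map_pow, map_inv] at this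
    exact mul_inv_eq_one.mp this
  have Hr : r = a ^ m := by
    have := hrel _ (show (FreeGroup.of 2)⁻¹ * FreeGroup.of 0 ^ (3 * 2 ^ (u + 3) * c - 2) ∈ R from
      Set.mem_insert_of_mem _ (Set.mem_insert_of_mem _ (Set.mem_insert_of_mem _
        (Set.mem_insert_of_mem _ (Set.mem_insert_of_mem _ (Set.mem_insert_of_mem _
          (Set.mem_singleton _)))))))
    simp only [map_mul, map_pow, map_inv] at this
    have : r⁻¹ * a ^ m = 1 := this
    rw [inv_mul_eq_one] at this
    exact this
  -- derive the key commutation relation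
  have Hs' : s = (a * b * r)⁻¹ := eq_inv_of_mul_eq_one_right Habrs
  have Habr2 : (a * b * a ^ m) * (a * b * a ^ m) = 1 := by
    have h := Hs
    rw [Hs', Hr, inv_pow, inv_eq_one, pow_two] at h
    exact h
  have Hkk : b * a ^ ((m:ℤ)+1) * b * a ^ ((m:ℤ)+1) = 1 := by
    have step : b * (a^m * a) * b * (a^m * a)
        = a⁻¹ * ((a * b * a ^ m) * (a * b * a ^ m)) * a := by
      group
    have h1 : b * a ^ (m+1) * b * a ^ (m+1) = 1 := by
      rw [pow_succ, step, Habr2]; group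
    have hz : a ^ ((m:ℤ)+1) = a ^ (m+1) := by
      rw [← zpow_natCast]; norm_cast
    rw [hz]; exact h1
  have hab2z : a ^ (2:ℤ) = b ^ (2:ℤ) := by
    have := Hab2
    rw [show (2:ℤ) = ((2:ℕ):ℤ) by norm_num, zpow_natCast, zpow_natCast]
    exact this
  have hkodd : (m:ℤ) + 1 = 2 * (3 * 2^(u+2) * c - 1) + 1 := by
    have h23 : (2:ℤ)^(u+3) = 2 * 2^(u+2) := by ring
    have hmz : (m:ℤ) = 3 * 2^(u+3) * c - 2 := by
      have : (m:ℤ) + 2 = ((M:ℕ):ℤ) := by exact_mod_cast congrArg (Nat.cast : ℕ → ℤ) hmM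
      rw [hM_def] at this; push_cast at this ⊢; omega
    rw [hmz, h23]; ring
  have Hconj : b * a * b⁻¹ = a ^ (-(2 * ((m:ℤ)+1) + 1)) :=
    conj_core a b ((m:ℤ)+1) (3 * 2^(u+2) * (c:ℤ) - 1) (by exact_mod_cast hkodd) hab2z Hkk
  have HconjFinal : b * a * b⁻¹ = a ^ ((2^(u+4)+1 : ℕ)) := by
    rw [Hconj]
    have hmz : (m:ℤ) = 3 * 2^(u+3) * c - 2 := by
      have : (m:ℤ) + 2 = ((M:ℕ):ℤ) := by exact_mod_cast congrArg (Nat.cast : ℕ → ℤ) hmM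
      rw [hM_def] at this; push_cast at this ⊢; omega
    have hdvd : ((2^(u+4+1) : ℕ):ℤ) ∣ (-(2 * ((m:ℤ)+1) + 1)) - ((2^(u+4)+1 : ℕ):ℤ) := by
      refine ⟨-(3*v+2), ?_⟩
      rw [hmz, hcdef]
      push_cast
      ring
    have := zpow_eq_zpow_of_dvd a (2^(u+4+1)) Ha (-(2 * ((m:ℤ)+1) + 1)) ((2^(u+4)+1 : ℕ):ℤ) hdvd
    rw [this, zpow_natCast]
  have part1 : b * a = a ^ (2^(u+4)+1) * b := by
    rw [← mul_inv_eq_iff_eq_mul]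
    exact HconjFinal
  refine ⟨part1, ?_⟩
  -- Part 2
  intro φ hφ
  have Linl : ∀ α β : ZMod (2^(u+4+1)),
      (inl (ofAdd α) : _ ⋊[φ] _) * inl (ofAdd β) = inl (ofAdd (α+β)) := by
    intro α β; rw [← map_mul]; rfl
  have Lpow : ∀ (α : ZMod (2^(u+4+1))) (p : ℕ),
      (inl (ofAdd α) : _ ⋊[φ] _) ^ p = inl (ofAdd (p*α)) := by
    intro α p
    rw [← map_pow, ← ofAdd_nsmul, nsmul_eq_mul]
  have Lconj : ∀ α : ZMod (2^(u+4+1)),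
      (inr (ofAdd (1 : ZMod 2)) : _ ⋊[φ] _) * inl (ofAdd α) * (inr (ofAdd (1 : ZMod 2)))⁻¹
        = inl (ofAdd ((2^(u+4)+1)*α)) := by
    intro α
    calc (inr (ofAdd (1 : ZMod 2)) : _ ⋊[φ] _) * inl (ofAdd α) * (inr (ofAdd (1 : ZMod 2)))⁻¹
        = inr (ofAdd (1:ZMod 2)) * inl (ofAdd α) * inr ((ofAdd (1:ZMod 2))⁻¹) := by rw [map_inv]
    _ = inl (φ (ofAdd 1) (ofAdd α)) := (inl_aut _ _).symm
    _ = inl (ofAdd ((2^(u+4)+1)*α)) := by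
        have hcast : ((2^(u+4)+1 : ℕ) : ZMod (2^(u+4+1))) = 2^(u+4)+1 := by push_cast; ring
        rw [hφ, ← ofAdd_nsmul, nsmul_eq_mul, hcast]
  have LY2 : (inr (ofAdd (1 : ZMod 2)) : _ ⋊[φ] _) ^ 2 = 1 := by
    rw [← map_pow, ← ofAdd_nsmul]
    have h2 : (2 : ℕ) • (1 : ZMod 2) = 0 := by decide
    rw [h2]
    simp
  have Lsq : ∀ α : ZMod (2^(u+4+1)),
      ((inl (ofAdd α) : _ ⋊[φ] _) * inr (ofAdd (1 : ZMod 2))) ^ 2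
        = inl (ofAdd ((2^(u+4)+2)*α)) := by
    intro α
    have expand : ((inl (ofAdd α) : _ ⋊[φ] _) * inr (ofAdd (1 : ZMod 2))) ^ 2
        = inl (ofAdd α) *
          (inr (ofAdd (1 : ZMod 2)) * inl (ofAdd α) * (inr (ofAdd (1 : ZMod 2)))⁻¹) *
          (inr (ofAdd (1 : ZMod 2))) ^ 2 := by
      rw [pow_two, pow_two]; simp [mul_assoc]
    have harith : α + (2^(u+4)+1)*α = (2^(u+4)+2)*α := by ring
    rw [expand, Lconj, LY2, mul_one, Linl, harith]
  have factA : ((2^(u+4)+2) * (2^(u+3)+1) : ZMod (2^(u+4+1))) = 2 := by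
    have h := zmod_nat_eq (2^(u+4+1)) ((2^(u+4)+2) * (2^(u+3)+1)) 2 0 (2^(u+2)+1) (by ring)
    push_cast at h
    exact h
  -- abbreviations
  have hNdvd : ∀ E : ℤ, ((2^(u+4+1):ℕ):ℤ) ∣ E → a ^ E = 1 := by
    intro E hE
    have := zpow_eq_zpow_of_dvd a (2^(u+4+1)) Ha E 0 (by simpa using hE)
    simpa using this
  -- more ZMod facts
  have factB : ((2^(u+4):ℕ) : ZMod (2^(u+4+1))) * ((m:ℕ) : ZMod (2^(u+4+1))) = 0 := by
    have h := zmod_nat_eq (2^(u+4+1)) (2^(u+4)*m) 0 1 (3*2^(u+2)*c) (by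
      calc 2^(u+4)*m + 2^(u+4+1)*1 = 2^(u+4)*(m+2) := by ring
      _ = 0 + 2^(u+4+1)*(3*2^(u+2)*c) := by rw [hmM, hM_def]; ring)
    push_cast at h ⊢
    linear_combination h
  have factE : ((2^(u+4)+2) * (1 + (2^(u+3)+1) + (2^(u+4)+1)*((m:ℕ) : ZMod (2^(u+4+1))))
      : ZMod (2^(u+4+1))) = 0 := by
    have he : 2 + 2^(u+3) + (2^(u+4)+1)*m = 16*2^u*(48*2^u*v+24*2^u+3*v) := by
      apply Nat.add_right_cancel (m := (2^(u+4)+1)*2)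
      calc (2 + 2^(u+3) + (2^(u+4)+1)*m) + (2^(u+4)+1)*2
          = 2 + 2^(u+3) + (2^(u+4)+1)*(m+2) := by ring
        _ = 2 + 2^(u+3) + (2^(u+4)+1)*M := by rw [hmM]
        _ = 16*2^u*(48*2^u*v+24*2^u+3*v) + (2^(u+4)+1)*2 := by rw [hM_def, hcdef]; ring
    have h := zmod_nat_eq (2^(u+4+1)) ((2^(u+4)+2) * (2 + 2^(u+3) + (2^(u+4)+1)*m)) 0 0
      (3*(8*2^u+1)*(16*2^u*v+8*2^u+v)) (by rw [he]; ring)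
    push_cast at h ⊢
    linear_combination h
  -- the forward homomorphism
  set fdef : Fin 4 → (Multiplicative (ZMod (2^(u+4+1))) ⋊[φ] Multiplicative (ZMod 2)) :=
    ![ inl (ofAdd 1),
       inl (ofAdd (2^(u+3)+1)) * inr (ofAdd 1),
       inl (ofAdd ((m:ℕ) : ZMod (2^(u+4+1)))),
       (inl (ofAdd 1) * (inl (ofAdd (2^(u+3)+1)) * inr (ofAdd 1)) *
         inl (ofAdd ((m:ℕ) : ZMod (2^(u+4+1)))))⁻¹ ] with hfdef
  have Lswap : ∀ α β : ZMod (2^(u+4+1)),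
      (inl (ofAdd α) : _ ⋊[φ] _) * inr (ofAdd (1 : ZMod 2)) * inl (ofAdd β)
        = inl (ofAdd (α + (2^(u+4)+1)*β)) * inr (ofAdd (1 : ZMod 2)) := by
    intro α β
    calc (inl (ofAdd α) : _ ⋊[φ] _) * inr (ofAdd (1 : ZMod 2)) * inl (ofAdd β)
        = inl (ofAdd α) *
          (inr (ofAdd (1 : ZMod 2)) * inl (ofAdd β) * (inr (ofAdd (1 : ZMod 2)))⁻¹) *
          inr (ofAdd (1 : ZMod 2)) := by simp [mul_assoc]
    _ = inl (ofAdd α) * inl (ofAdd ((2^(u+4)+1)*β)) * inr (ofAdd (1 : ZMod 2)) := by rw [Lconj]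
    _ = inl (ofAdd (α + (2^(u+4)+1)*β)) * inr (ofAdd (1 : ZMod 2)) := by rw [Linl]
  have hprod : fdef 0 * fdef 1 * fdef 2
      = inl (ofAdd (1 + (2^(u+3)+1) + (2^(u+4)+1)*((m:ℕ) : ZMod (2^(u+4+1)))))
        * inr (ofAdd (1 : ZMod 2)) := by
    show (inl (ofAdd 1) : _ ⋊[φ] _) * (inl (ofAdd (2^(u+3)+1)) * inr (ofAdd 1)) *
        inl (ofAdd ((m:ℕ) : ZMod (2^(u+4+1)))) = _
    rw [← mul_assoc, Linl, Lswap]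
  have hsq1 : (fdef 1) ^ 2 = inl (ofAdd (2 : ZMod (2^(u+4+1)))) := by
    show ((inl (ofAdd (2^(u+3)+1)) : _ ⋊[φ] _) * inr (ofAdd 1)) ^ 2 = _
    rw [Lsq, factA]
  have hf : ∀ w ∈ R, FreeGroup.lift fdef w = 1 := by
    intro w hw
    rw [hR] at hw
    simp only [Set.mem_insert_iff, Set.mem_singleton_iff] at hw
    rcases hw with rfl|rfl|rfl|rfl|rfl|rfl|rfl
    · -- of 0 ^ 2^(u+4+1)
      rw [map_pow, FreeGroup.lift_apply_of]
      show (inl (ofAdd (1 : ZMod (2^(u+4+1)))) : _ ⋊[φ] _) ^ 2^(u+4+1) = 1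
      rw [Lpow]
      have hE : ((2^(u+4+1):ℕ) : ZMod (2^(u+4+1))) * 1 = 0 := by
        simp [ZMod.natCast_self]
      rw [hE]; simp
    · -- of 1 ^ 2^(u+4+1)
      rw [map_pow, FreeGroup.lift_apply_of]
      have h2 : 2^(u+4+1) = 2 * 2^(u+4) := by ring
      show (fdef 1) ^ 2^(u+4+1) = 1
      have e1 : (fdef 1) ^ 2^(u+4+1) = ((fdef 1) ^ 2) ^ 2^(u+4) :=
        congrArg (fun t => (fdef 1) ^ t) h2 |>.trans (pow_mul _ 2 _)
      rw [e1, hsq1, Lpow]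
      have hE : ((2^(u+4):ℕ) : ZMod (2^(u+4+1))) * 2 = 0 := by
        have h := zmod_nat_eq (2^(u+4+1)) (2^(u+4)*2) 0 0 1 (by ring)
        push_cast at h ⊢
        linear_combination h
      rw [hE]; simp
    · -- of 2 ^ 2^(u+4)
      rw [map_pow, FreeGroup.lift_apply_of]
      show (inl (ofAdd ((m:ℕ) : ZMod (2^(u+4+1)))) : _ ⋊[φ] _) ^ 2^(u+4) = 1
      rw [Lpow, factB]; simp
    · -- of 3 ^ 2
      rw [map_pow, FreeGroup.lift_apply_of]
      show (fdef 3) ^ 2 = 1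
      have h3 : fdef 3 = (fdef 0 * fdef 1 * fdef 2)⁻¹ := rfl
      rw [h3, inv_pow, inv_eq_one, hprod, Lsq, factE]
      simp
    · -- product relation
      simp only [map_mul, FreeGroup.lift_apply_of]
      show fdef 0 * fdef 1 * fdef 2 * fdef 3 = 1
      have h3 : fdef 3 = (fdef 0 * fdef 1 * fdef 2)⁻¹ := rfl
      rw [h3, mul_inv_cancel]
    · -- a^2 b^-2
      simp only [map_mul, map_pow, map_inv, FreeGroup.lift_apply_of]
      show (inl (ofAdd (1 : ZMod (2^(u+4+1)))) : _ ⋊[φ] _) ^ 2 * ((fdef 1) ^ 2)⁻¹ = 1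
      rw [hsq1, Lpow]
      have hE : ((2:ℕ) : ZMod (2^(u+4+1))) * 1 = 2 := by push_cast; ring
      rw [hE, mul_inv_cancel]
    · -- r = a^m
      simp only [map_mul, map_pow, map_inv, FreeGroup.lift_apply_of]
      show (inl (ofAdd ((m:ℕ) : ZMod (2^(u+4+1)))) : _ ⋊[φ] _)⁻¹ *
        (inl (ofAdd (1 : ZMod (2^(u+4+1))))) ^ m = 1
      rw [Lpow, mul_one, inv_mul_cancel]
  set f : PresentedGroup R →* (Multiplicative (ZMod (2^(u+4+1))) ⋊[φ] Multiplicative (ZMod 2)) :=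
    PresentedGroup.toGroup hf with hf_def
  -- the backward homomorphism
  have hbz : ∀ z : ℤ, b * a^z * b⁻¹ = a^((2^(u+4)+1 : ℤ)*z) := by
    intro z
    calc b * a^z * b⁻¹ = (b * a * b⁻¹)^z := conj_zpow.symm
    _ = (a^((2^(u+4)+1 : ℕ)))^z := by rw [HconjFinal]
    _ = a^((2^(u+4)+1 : ℤ)*z) := by
        rw [← zpow_natCast a (2^(u+4)+1), ← zpow_mul]
        norm_num
  have hbb : b * b = a^(2:ℤ) := by
    have h2 : a^(2:ℤ) = a^(2:ℕ) := by
      rw [show (2:ℤ) = ((2:ℕ):ℤ) by norm_num, zpow_natCast]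
    rw [h2, Hab2, pow_two]
  have hw2 : ((a^(-(2^(u+3)+1 : ℤ)) * b) * (a^(-(2^(u+3)+1 : ℤ)) * b)) = 1 := by
    have step : (a^(-(2^(u+3)+1 : ℤ)) * b) * (a^(-(2^(u+3)+1 : ℤ)) * b)
        = a^(-(2^(u+3)+1 : ℤ)) * (b * a^(-(2^(u+3)+1 : ℤ)) * b⁻¹) * (b * b) := by group
    rw [step, hbz, hbb, ← zpow_add, ← zpow_add]
    apply hNdvd
    refine ⟨-(2^(u+2)+1), ?_⟩
    push_cast
    ring
  have hw2' : (a^(-(2^(u+3)+1 : ℤ)) * b) ^ 2 = 1 := by rw [pow_two]; exact hw2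
  have hcomm : (a^(-(2^(u+3)+1 : ℤ)) * b) * a * (a^(-(2^(u+3)+1 : ℤ)) * b)⁻¹
      = a ^ (2^(u+4)+1 : ℕ) := by
    have h1 : (a^(-(2^(u+3)+1 : ℤ)) * b) * a * (a^(-(2^(u+3)+1 : ℤ)) * b)⁻¹
        = a^(-(2^(u+3)+1 : ℤ)) * (b * a^(1:ℤ) * b⁻¹) * a^((2^(u+3)+1 : ℤ)) := by
      rw [zpow_one]; group
    rw [h1, hbz, ← zpow_add, ← zpow_add, ← zpow_natCast a (2^(u+4)+1)]
    congr 1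
    push_cast
    ring
  have hψ₁ex : ∃ ψ₁ : Multiplicative (ZMod (2^(u+4+1))) →* PresentedGroup R,
      (∀ p : ℕ, ψ₁ (ofAdd ((p:ℕ) : ZMod (2^(u+4+1)))) = a ^ p) ∧ ψ₁ (ofAdd 1) = a :=
    ⟨zmodGenHom (2^(u+4+1)) a Ha, fun p => zmodGenHom_natCast _ _ _ p,
      zmodGenHom_ofAdd_one _ _ _⟩
  obtain ⟨ψ₁, hψ₁n, hψ₁1⟩ := hψ₁ex
  have hψ₂ex : ∃ ψ₂ : Multiplicative (ZMod 2) →* PresentedGroup R,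
      ψ₂ (ofAdd 1) = a^(-(2^(u+3)+1 : ℤ)) * b :=
    ⟨zmodGenHom 2 _ hw2', zmodGenHom_ofAdd_one _ _ _⟩
  obtain ⟨ψ₂, hψ₂1⟩ := hψ₂ex
  have hcase2 : ∀ g : Multiplicative (ZMod 2), g = 1 ∨ g = ofAdd 1 := by decide
  have hcompat : ∀ g, ψ₁.comp (φ g).toMonoidHom
      = (MulAut.conj (ψ₂ g)).toMonoidHom.comp ψ₁ := by
    intro g
    rcases hcase2 g with rfl | rfl
    · apply zmod_hom_ext
      simp [MulAut.conj]
    · apply zmod_hom_ext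
      have lhs : (ψ₁.comp (φ (ofAdd 1)).toMonoidHom) (ofAdd 1) = a ^ (2^(u+4)+1 : ℕ) := by
        simp only [MonoidHom.comp_apply, MulEquiv.coe_toMonoidHom]
        rw [hφ, map_pow, hψ₁1]
      have rhs : ((MulAut.conj (ψ₂ (ofAdd 1))).toMonoidHom.comp ψ₁) (ofAdd 1)
          = a ^ (2^(u+4)+1 : ℕ) := by
        simp only [MonoidHom.comp_apply, MulEquiv.coe_toMonoidHom, MulAut.conj_apply]
        rw [hψ₁1, hψ₂1]
        exact hcomm
      rw [lhs, rhs]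
  have hgex : ∃ g : (Multiplicative (ZMod (2^(u+4+1))) ⋊[φ] Multiplicative (ZMod 2))
        →* PresentedGroup R,
      (∀ x, g (inl x) = ψ₁ x) ∧ (∀ x, g (inr x) = ψ₂ x) :=
    ⟨SemidirectProduct.lift ψ₁ ψ₂ hcompat, fun x => lift_inl _ _ _ _, fun x => lift_inr _ _ _ _⟩
  obtain ⟨g, hginl, hginr⟩ := hgex
  -- characterize f on generators
  have hf0 : f (PresentedGroup.of 0) = inl (ofAdd (1 : ZMod (2^(u+4+1)))) := by
    rw [hf_def, PresentedGroup.toGroup.of]; rfl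
  have hf1 : f (PresentedGroup.of 1)
      = inl (ofAdd ((2^(u+3)+1 : ZMod (2^(u+4+1))))) * inr (ofAdd 1) := by
    rw [hf_def, PresentedGroup.toGroup.of]; rfl
  have hf2 : f (PresentedGroup.of 2) = inl (ofAdd ((m:ℕ) : ZMod (2^(u+4+1)))) := by
    rw [hf_def, PresentedGroup.toGroup.of]; rfl
  have hf3 : f (PresentedGroup.of 3)
      = (inl (ofAdd 1) * (inl (ofAdd (2^(u+3)+1)) * inr (ofAdd 1)) *
          inl (ofAdd ((m:ℕ) : ZMod (2^(u+4+1)))))⁻¹ := by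
    rw [hf_def, PresentedGroup.toGroup.of]; rfl
  clear_value f
  clear hf_def
  have hb'' : a ^ (2^(u+3)+1) * (a^(-(2^(u+3)+1 : ℤ)) * b) = b := by
    rw [← zpow_natCast a (2^(u+3)+1), ← mul_assoc, ← zpow_add]
    have hE0 : ((2^(u+3)+1 : ℕ) : ℤ) + -(2^(u+3)+1 : ℤ) = 0 := by push_cast; ring
    rw [hE0, zpow_zero, one_mul]
  clear_value a b r s
  clear hf hrel Lconj LY2 Lsq Lswap hprod hsq1 factA factB factE hNdvd hbz hbb hw2 hw2' hcomm hcompat hcase2 Lpow hkodd Hconj Hkk Habr2 hab2z Ha Hb Hs Habrs Hab2 HconjFinal hM2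
  -- g ∘ f = id
  have hgf : g.comp f = MonoidHom.id _ := by
    apply PresentedGroup.ext
    intro x
    simp only [MonoidHom.comp_apply, MonoidHom.id_apply]
    fin_cases x
    · show g (f (PresentedGroup.of 0)) = PresentedGroup.of 0
      rw [hf0, hginl, hψ₁1, ha_def]
    · show g (f (PresentedGroup.of 1)) = PresentedGroup.of 1
      rw [hf1, map_mul, hginl, hginr, hψ₂1]
      have hc1 : ((2^(u+3)+1 : ZMod (2^(u+4+1)))) = (((2^(u+3)+1 : ℕ)) : ZMod (2^(u+4+1))) := by
        push_cast; ring
      rw [hc1, hψ₁n, hb'', hb_def]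
    · show g (f (PresentedGroup.of 2)) = PresentedGroup.of 2
      rw [hf2, hginl, hψ₁n, ← Hr, hr_def]
    · show g (f (PresentedGroup.of 3)) = PresentedGroup.of 3
      rw [hf3, map_inv, map_mul, map_mul, map_mul, hginl, hginl, hginl, hginr,
        hψ₁1, hψ₂1]
      have hc1 : ((2^(u+3)+1 : ZMod (2^(u+4+1)))) = (((2^(u+3)+1 : ℕ)) : ZMod (2^(u+4+1))) := by
        push_cast; ring
      rw [hc1, hψ₁n, hψ₁n, mul_assoc a, hb'', ← Hr, ← mul_assoc, ← Hs', hs_def]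
  -- f ∘ g = id
  have hfg : f.comp g = MonoidHom.id _ := by
    apply SemidirectProduct.hom_ext
    · apply zmod_hom_ext
      simp only [MonoidHom.comp_apply, MonoidHom.id_apply]
      rw [hginl, hψ₁1, ha_def, hf0]
    · apply zmod_hom_ext
      simp only [MonoidHom.comp_apply, MonoidHom.id_apply]
      rw [hginr, hψ₂1, map_mul, map_zpow, ha_def, hb_def, hf0, hf1]
      have Lzpow : ∀ (α : ZMod (2^(u+4+1))) (z : ℤ),
          (inl (ofAdd α) : _ ⋊[φ] _) ^ z = inl (ofAdd ((z : ZMod (2^(u+4+1)))*α)) := by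
        intro α z
        rw [← map_zpow, ← ofAdd_zsmul, zsmul_eq_mul]
      rw [Lzpow, ← mul_assoc, Linl]
      have hE : ((-(2^(u+3)+1 : ℤ) : ℤ) : ZMod (2^(u+4+1))) * 1 + (2^(u+3)+1) = 0 := by
        push_cast; ring
      refine (congrArg (fun t => (inl (ofAdd t) : _ ⋊[φ] _) * inr (ofAdd 1)) hE).trans ?_
      simp
  exact ⟨MonoidHom.toMulEquiv f g hgf hfg⟩
end

section
/- The tuple (a, −3a−4, 2a, 2, 2) in ℤ/2^{n+1}ℤ, with a odd, is a generating vector of type (0; 2^{n+1}, 2^{n+1}, 2^n, 2^n, 2^n): a generates ℤ/2^{n+1}ℤ, −3a−4 has order 2^{n+1}, each of 2a, 2, 2 has order 2^n, and the sum a + (−3a−4) + 2a + 2 + 2 ≡ 0 (mod 2^{n+1}). -/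
theorem stmt_12 (n a : ℕ) (hn : 1 ≤ n) (ha : Odd a) :
    AddSubgroup.closure {(a : ZMod (2 ^ (n + 1)))} = ⊤ ∧
    addOrderOf (a : ZMod (2 ^ (n + 1))) = 2 ^ (n + 1) ∧
    addOrderOf (-3 * (a : ZMod (2 ^ (n + 1))) - 4) = 2 ^ (n + 1) ∧
    addOrderOf (2 * (a : ZMod (2 ^ (n + 1)))) = 2 ^ n ∧
    addOrderOf (2 : ZMod (2 ^ (n + 1))) = 2 ^ n ∧
    (a : ZMod (2 ^ (n + 1))) + (-3 * (a : ZMod (2 ^ (n + 1))) - 4) +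
        2 * (a : ZMod (2 ^ (n + 1))) + 2 + 2 = 0 := by
  have hN : (2 : ℕ) ^ (n + 1) ≠ 0 := by positivity
  have hne : NeZero (2 ^ (n + 1)) := ⟨hN⟩
  have hcard : Nat.card (ZMod (2 ^ (n + 1))) = 2 ^ (n + 1) := by
    simp [Nat.card_eq_fintype_card, ZMod.card]
  -- order of a
  have hoa : addOrderOf (a : ZMod (2 ^ (n + 1))) = 2 ^ (n + 1) := by
    rw [ZMod.addOrderOf_coe a hN, Nat.Coprime.gcd_eq_one, Nat.div_one]
    exact (Nat.coprime_two_left.mpr ha).pow_left _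
  -- order of -3a-4
  have h34 : (-3 * (a : ZMod (2 ^ (n + 1))) - 4) = -(((3 * a + 4 : ℕ) : ZMod (2 ^ (n + 1)))) := by
    push_cast; ring
  have hob : addOrderOf (-3 * (a : ZMod (2 ^ (n + 1))) - 4) = 2 ^ (n + 1) := by
    rw [h34, addOrderOf_neg, ZMod.addOrderOf_coe _ hN, Nat.Coprime.gcd_eq_one, Nat.div_one]
    refine Nat.Coprime.pow_left _ (Nat.coprime_two_left.mpr ?_)
    rcases ha with ⟨k, hk⟩
    exact ⟨3 * k + 3, by omega⟩
  -- order of 2a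
  have hoc : addOrderOf (2 * (a : ZMod (2 ^ (n + 1)))) = 2 ^ n := by
    have : (2 * (a : ZMod (2 ^ (n + 1)))) = ((2 * a : ℕ) : ZMod (2 ^ (n + 1))) := by push_cast; ring
    rw [this, ZMod.addOrderOf_coe _ hN]
    have hg : Nat.gcd (2 ^ (n + 1)) (2 * a) = 2 := by
      rw [pow_succ, mul_comm (2 ^ n) 2, Nat.gcd_mul_left,
        Nat.Coprime.gcd_eq_one ((Nat.coprime_two_left.mpr ha).pow_left _), mul_one]
    rw [hg, pow_succ]; omega
  -- order of 2
  have hod : addOrderOf (2 : ZMod (2 ^ (n + 1))) = 2 ^ n := by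
    have : (2 : ZMod (2 ^ (n + 1))) = ((2 : ℕ) : ZMod (2 ^ (n + 1))) := by push_cast; ring
    rw [this, ZMod.addOrderOf_coe _ hN]
    have hg : Nat.gcd (2 ^ (n + 1)) 2 = 2 := Nat.gcd_eq_right (dvd_pow_self 2 (by omega))
    rw [hg, pow_succ]; omega
  refine ⟨?_, hoa, hob, hoc, hod, by ring⟩
  -- closure
  have : AddSubgroup.zmultiples (a : ZMod (2 ^ (n + 1))) = ⊤ := by
    apply AddSubgroup.eq_top_of_card_eq
    rw [Nat.card_zmultiples, hoa, hcard]
  rw [← this]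
  exact (AddSubgroup.zmultiples_eq_closure _).symm
end
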